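/- Define box-adding operators on the free module spanned by strict partitions: a_n adds a box on the n-th diagonal of the shifted diagram if possible, multiplies by β if there is a removable box on the n-th diagonal, and gives 0 otherwise; set A_i(x) := 1 + x·a_i. Then A_i(x) and A_j(y) commute whenever |i-j| > 1. -/

import Mathlib

noncomputable section
open Finset

/-- A strict partition: a strictly decreasing list of positive integers. -/
def StrictPartition : Type := {l : List ℕ // l.Chain' (· > ·) ∧ ∀ x ∈ l, 0 < x}

/-- The shifted diagram of a list `l = (l₁, l₂, …)`:
`SD = {(i, i+j-1) : 1 ≤ i ≤ length l, 1 ≤ j ≤ lᵢ}` (rows and columns indexed from 1). -/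
def shiftedDiagram (l : List ℕ) : Finset (ℕ × ℕ) :=
  (Finset.Icc 1 l.length ×ˢ Finset.Icc 1 (l.length + l.sum)).filter
    fun p => p.1 ≤ p.2 ∧ p.2 < p.1 + l.getD (p.1 - 1) 0

/-- The shifted diagram of a strict partition. -/
def SD (μ : StrictPartition) : Finset (ℕ × ℕ) := shiftedDiagram μ.1

/-- `c` is a removable box of the strict partition `μ`: `c ∈ SD μ` and deleting `c`
yields the shifted diagram of a strict partition. -/
def IsRemovable (μ : StrictPartition) (c : ℕ × ℕ) : Prop :=
  c ∈ SD μ ∧ ∃ ν : StrictPartition, SD ν = (SD μ).erase c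

/-- `c` is an addable box of the strict partition `μ`: `c ∉ SD μ` and adjoining `c`
yields the shifted diagram of a strict partition. -/
def IsAddable (μ : StrictPartition) (c : ℕ × ℕ) : Prop :=
  c ∉ SD μ ∧ ∃ ν : StrictPartition, SD ν = insert c (SD μ)

open scoped Classical in
/-- The diagonal box-adding operator `a_n` on basis elements: `a_n μ = β·μ` if `μ` has a
removable box on diagonal `n`; `a_n μ = ν` if `SD ν = SD μ ⊔ {(i,j)}` with `j - i = n`;
and `a_n μ = 0` otherwise. -/
def aRaw {R : Type*} [CommRing R] (β : R) (n : ℕ) (μ : StrictPartition) :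
    StrictPartition →₀ R :=
  if ∃ c : ℕ × ℕ, IsRemovable μ c ∧ c.2 = c.1 + n then Finsupp.single μ β
  else if h : ∃ ν : StrictPartition, ∃ c : ℕ × ℕ, c.2 = c.1 + n ∧ c ∉ SD μ ∧
      SD ν = insert c (SD μ) then
    Finsupp.single h.choose 1
  else 0

/-- The operator `a_n`, extended linearly to the free module on strict partitions. -/
def aOp {R : Type*} [CommRing R] (β : R) (n : ℕ) :
    (StrictPartition →₀ R) →ₗ[R] (StrictPartition →₀ R) :=
  Finsupp.lift (StrictPartition →₀ R) R StrictPartition (aRaw β n)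

/-- The operator `A_i(x) := 1 + x·a_i`. -/
def AOp {R : Type*} [CommRing R] (β : R) (i : ℕ) (x : R) :
    (StrictPartition →₀ R) →ₗ[R] (StrictPartition →₀ R) :=
  LinearMap.id + x • aOp β i
/-! ### Auxiliary development -/

namespace AOpAux

/-- The row-length function of a list (0-indexed). -/
def Gd (μ : StrictPartition) (k : ℕ) : ℕ := μ.1.getD k 0

/-- The local step condition. -/
def Step (g : ℕ → ℕ) (s : ℕ) : Prop := g (s+1) < g s ∨ (g s = 0 ∧ g (s+1) = 0)

/-- A function `ℕ → ℕ` that is the row-length function of a strict partition. -/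
def Good (g : ℕ → ℕ) : Prop := ∀ s, Step g s

lemma Good.step {g : ℕ → ℕ} (hg : Good g) (s : ℕ) :
    g (s+1) < g s ∨ (g s = 0 ∧ g (s+1) = 0) := hg s

lemma good_Gd (μ : StrictPartition) : Good (Gd μ) := by
  obtain ⟨l, hc, hp⟩ := μ
  intro s
  unfold Step Gd
  simp only
  by_cases h1 : s + 1 < l.length
  · left
    rw [List.getD_eq_getElem l 0 h1, List.getD_eq_getElem l 0 (by omega)]
    exact List.isChain_iff_getElem.mp hc s (by omega)
  · by_cases h2 : s < l.length
    · left
      rw [List.getD_eq_default l 0 (by omega), List.getD_eq_getElem l 0 h2]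
      exact hp _ (List.getElem_mem h2)
    · right
      rw [List.getD_eq_default l 0 (by omega), List.getD_eq_default l 0 (by omega)]
      exact ⟨rfl, rfl⟩

lemma Good.zero_mono {g : ℕ → ℕ} (hg : Good g) {k m : ℕ} (hk : g k = 0) (hkm : k ≤ m) :
    g m = 0 := by
  induction m with
  | zero => have : k = 0 := by omega
            subst this; exact hk
  | succ m ih =>
    rcases Nat.lt_or_ge k (m+1) with h | h
    · have hm : g m = 0 := ih (by omega)
      rcases hg.step m with h' | h' <;> omega
    · have : k = m + 1 := by omega
      subst this; exact hk

lemma Good.anti {g : ℕ → ℕ} (hg : Good g) {k m : ℕ} (hkm : k < m) (hm : 0 < g m) :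
    g m < g k := by
  induction m with
  | zero => omega
  | succ m ih =>
    rcases hg.step m with h' | h'
    · rcases Nat.lt_or_ge k m with h | h
      · have := ih h (by omega); omega
      · have hkm2 : k = m := by omega
        subst hkm2; omega
    · omega

lemma Good.bound {g : ℕ → ℕ} (hg : Good g) {k : ℕ} (hk : 0 < g k) : g k + k ≤ g 0 := by
  rcases Nat.eq_zero_or_pos k with rfl | h
  · omega
  · have := hg.anti h hk
    -- g k < g 0, but need g k + k ≤ g 0; do induction instead
    clear this
    induction k with
    | zero => omega
    | succ k ih =>
      have h1 : g (k+1) < g k := by rcases hg.step k with h' | h' <;> omega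
      rcases Nat.eq_zero_or_pos k with rfl | hk0
      · omega
      · have := ih (by omega) hk0
        omega

/-- Build a strict partition with a prescribed `Good` row-length function. -/
lemma exists_sp_of_good {g : ℕ → ℕ} (hg : Good g) :
    ∃ μ : StrictPartition, ∀ k, Gd μ k = g k := by
  have hex : ∃ k, g k = 0 := by
    refine ⟨g 0, ?_⟩
    by_contra h
    have := hg.bound (k := g 0) (Nat.pos_of_ne_zero h)
    omega
  classical
  let N := Nat.find hex
  have hN : g N = 0 := Nat.find_spec hex
  have hlt : ∀ k < N, 0 < g k := fun k hk =>
    Nat.pos_of_ne_zero (Nat.find_min hex hk)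
  have hge : ∀ k, N ≤ k → g k = 0 := fun k hk => hg.zero_mono hN hk
  refine ⟨⟨(List.range N).map g, ?_, ?_⟩, ?_⟩
  · apply List.isChain_iff_getElem.mpr
    intro s hs
    simp only [List.length_map, List.length_range] at hs
    simp only [List.get_eq_getElem, List.getElem_map, List.getElem_range]
    show g s > g (s+1)
    have := hlt s (by omega)
    rcases hg.step s with h' | h' <;> omega
  · intro x hx
    simp only [List.mem_map, List.mem_range] at hx
    obtain ⟨k, hk, rfl⟩ := hx
    exact hlt k hk
  · intro k
    unfold Gd
    simp only
    by_cases hk : k < N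
    · rw [List.getD_eq_getElem _ 0 (by simpa using hk)]
      simp
    · rw [List.getD_eq_default _ 0 (by simpa using hk)]
      exact (hge k (by omega)).symm

/-- The row-length function determines the strict partition. -/
lemma sp_ext {μ ν : StrictPartition} (h : ∀ k, Gd μ k = Gd ν k) : μ = ν := by
  obtain ⟨l, hc, hp⟩ := μ
  obtain ⟨l', hc', hp'⟩ := ν
  simp only [Gd] at h
  have hlen : l.length = l'.length := by
    by_contra hne
    rcases Nat.lt_or_ge l.length l'.length with hl | hl
    · have h1 := h l.length
      rw [List.getD_eq_default _ 0 (le_refl _), List.getD_eq_getElem _ 0 hl] at h1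
      exact absurd (hp' _ (List.getElem_mem hl)) (by omega)
    · have hl' : l'.length < l.length := by omega
      have h1 := h l'.length
      rw [List.getD_eq_default _ 0 (le_refl _), List.getD_eq_getElem _ 0 hl'] at h1
      exact absurd (hp _ (List.getElem_mem hl')) (by omega)
  apply Subtype.ext
  apply List.ext_getElem hlen
  intro k h1 h2
  have := h k
  rwa [List.getD_eq_getElem _ 0 h1, List.getD_eq_getElem _ 0 h2] at this

/-- Membership in the shifted diagram. -/
lemma mem_SD {μ : StrictPartition} {a b : ℕ} :
    (a, b) ∈ SD μ ↔ 1 ≤ a ∧ a ≤ b ∧ b < a + Gd μ (a - 1) := by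
  obtain ⟨l, hc, hp⟩ := μ
  simp only [SD, shiftedDiagram, Finset.mem_filter, Finset.mem_product, Finset.mem_Icc, Gd]
  constructor
  · rintro ⟨⟨⟨h1, h2⟩, h3, h4⟩, h5, h6⟩
    exact ⟨h1, h5, h6⟩
  · rintro ⟨h1, h2, h3⟩
    have hpos : 0 < l.getD (a - 1) 0 := by omega
    have hlen : a - 1 < l.length := by
      by_contra h
      rw [List.getD_eq_default _ 0 (by omega)] at hpos
      omega
    have hsum : l.getD (a - 1) 0 ≤ l.sum := by
      rw [List.getD_eq_getElem _ 0 hlen]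
      exact List.single_le_sum (fun x _ => Nat.zero_le x) _ (List.getElem_mem hlen)
    refine ⟨⟨⟨h1, by omega⟩, by omega, by omega⟩, h2, h3⟩

end AOpAux
namespace AOpAux

lemma mem_SD' {μ : StrictPartition} {m b : ℕ} :
    ((m + 1 : ℕ), b) ∈ SD μ ↔ m + 1 ≤ b ∧ b < m + 1 + Gd μ m := by
  rw [mem_SD]
  have : m + 1 - 1 = m := by omega
  rw [this]
  omega

lemma insert_to_update {μ ν : StrictPartition} {k n : ℕ}
    (h1 : (k + 1, k + 1 + n) ∉ SD μ) (h2 : SD ν = insert (k + 1, k + 1 + n) (SD μ)) :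
    Gd μ k = n ∧ Gd ν = Function.update (Gd μ) k (n + 1) := by
  have main : ∀ m, (m = k → Gd μ k = n ∧ Gd ν k = n + 1) ∧ (m ≠ k → Gd ν m = Gd μ m) := by
    intro m
    have key : ∀ b, (m + 1 ≤ b ∧ b < m + 1 + Gd ν m) ↔
        ((m = k ∧ b = k + 1 + n) ∨ (m + 1 ≤ b ∧ b < m + 1 + Gd μ m)) := by
      intro b
      rw [← mem_SD', h2, Finset.mem_insert, mem_SD', Prod.mk.injEq]
      omega
    constructor
    · rintro rfl
      have hnot : ¬ (m + 1 ≤ m + 1 + n ∧ m + 1 + n < m + 1 + Gd μ m) :=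
        fun hh => h1 (mem_SD'.mpr hh)
      have h3 := key (m + 1 + n)
      have h4 := key (m + 1 + Gd μ m)
      have h5 := key (m + 1 + n + 1)
      constructor <;> omega
    · intro hmk
      have h3 := key (m + 1 + Gd ν m)
      have h4 := key (m + 1 + Gd μ m)
      omega
  refine ⟨((main k).1 rfl).1, funext fun m => ?_⟩
  by_cases hm : m = k
  · subst hm
    rw [Function.update_self]
    exact ((main m).1 rfl).2
  · rw [Function.update_of_ne hm]
    exact (main m).2 hm

lemma update_to_insert {μ ν : StrictPartition} {k n : ℕ} (h1 : Gd μ k = n)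
    (h2 : Gd ν = Function.update (Gd μ) k (n + 1)) :
    (k + 1, k + 1 + n) ∉ SD μ ∧ SD ν = insert (k + 1, k + 1 + n) (SD μ) := by
  constructor
  · rw [mem_SD']
    omega
  · ext ⟨a, b⟩
    rw [mem_SD, Finset.mem_insert, mem_SD, Prod.mk.injEq]
    rcases eq_or_ne a (k + 1) with rfl | ha
    · have e1 : k + 1 - 1 = k := by omega
      simp only [e1, true_and, eq_self_iff_true]
      have e2 : Gd ν k = n + 1 := by rw [h2, Function.update_self]
      omega
    · rcases Nat.eq_zero_or_pos a with rfl | hpos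
      · omega
      · have e2 : Gd ν (a - 1) = Gd μ (a - 1) := by
          rw [h2, Function.update_of_ne (by omega)]
        omega

lemma removable_iff {μ : StrictPartition} {n : ℕ} :
    (∃ c : ℕ × ℕ, IsRemovable μ c ∧ c.2 = c.1 + n) ↔
    ∃ k, Gd μ k = n + 1 ∧ Good (Function.update (Gd μ) k n) := by
  constructor
  · rintro ⟨⟨a, b⟩, ⟨hmem, ν, hν⟩, hdiag⟩
    have hb : b = a + n := hdiag
    have ha : 1 ≤ a := (mem_SD.mp hmem).1
    obtain ⟨k, rfl⟩ : ∃ k, a = k + 1 := ⟨a - 1, by omega⟩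
    subst hb
    have hc1 : (k + 1, k + 1 + n) ∉ SD ν := by rw [hν]; exact Finset.notMem_erase _ _
    have hc2 : SD μ = insert (k + 1, k + 1 + n) (SD ν) := by
      rw [hν, Finset.insert_erase hmem]
    obtain ⟨hgν, hgμ⟩ := insert_to_update hc1 hc2
    refine ⟨k, by rw [hgμ, Function.update_self], ?_⟩
    have he : Function.update (Gd μ) k n = Gd ν := by
      funext m
      by_cases hm : m = k
      · subst hm; rw [Function.update_self, hgν]
      · rw [Function.update_of_ne hm, hgμ, Function.update_of_ne hm]
    rw [he]
    exact good_Gd ν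
  · rintro ⟨k, hk, hgood⟩
    obtain ⟨ν, hν⟩ := exists_sp_of_good hgood
    have h1 : Gd ν k = n := by rw [hν k, Function.update_self]
    have h2 : Gd μ = Function.update (Gd ν) k (n + 1) := by
      funext m
      by_cases hm : m = k
      · subst hm; rw [Function.update_self]; exact hk
      · rw [Function.update_of_ne hm, hν m, Function.update_of_ne hm]
    obtain ⟨hnot, hins⟩ := update_to_insert h1 h2
    refine ⟨(k + 1, k + 1 + n), ⟨?_, ν, ?_⟩, rfl⟩
    · rw [hins]; exact Finset.mem_insert_self _ _
    · rw [hins, Finset.erase_insert hnot]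

lemma addable_iff {μ : StrictPartition} {n : ℕ} :
    (∃ ν : StrictPartition, ∃ c : ℕ × ℕ, c.2 = c.1 + n ∧ c ∉ SD μ ∧
      SD ν = insert c (SD μ)) ↔
    ∃ k, Gd μ k = n ∧ Good (Function.update (Gd μ) k (n + 1)) := by
  constructor
  · rintro ⟨ν, ⟨a, b⟩, hd, hnot, hins⟩
    have hb : b = a + n := hd
    have ha : 1 ≤ a := by
      have hm : (a, b) ∈ SD ν := by rw [hins]; exact Finset.mem_insert_self _ _
      exact (mem_SD.mp hm).1
    obtain ⟨k, rfl⟩ : ∃ k, a = k + 1 := ⟨a - 1, by omega⟩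
    subst hb
    obtain ⟨h1, h2⟩ := insert_to_update hnot hins
    exact ⟨k, h1, by rw [← h2]; exact good_Gd ν⟩
  · rintro ⟨k, hk, hgood⟩
    obtain ⟨ν, hν⟩ := exists_sp_of_good hgood
    obtain ⟨hnot, hins⟩ := update_to_insert hk (funext hν)
    exact ⟨ν, (k + 1, k + 1 + n), rfl, hnot, hins⟩

lemma add_index_unique {g : ℕ → ℕ} (hg : Good g) {k k' n : ℕ} (hk : g k = n)
    (h1 : Good (Function.update g k (n + 1))) (hk' : g k' = n)
    (h1' : Good (Function.update g k' (n + 1))) : k = k' := by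
  have key : ∀ a b : ℕ, g a = n → g b = n → Good (Function.update g b (n + 1)) →
      a < b → False := by
    intro a b ha hb hgb hab
    rcases Nat.eq_zero_or_pos n with rfl | hn
    · obtain ⟨m, rfl⟩ : ∃ m, b = m + 1 := ⟨b - 1, by omega⟩
      have hz : g m = 0 := hg.zero_mono ha (by omega)
      have hstep := hgb.step m
      rw [Function.update_of_ne (by omega : m ≠ m + 1), Function.update_self] at hstep
      omega
    · have := hg.anti hab (by omega)
      omega
  rcases Nat.lt_trichotomy k k' with h | h | h
  · exact (key k k' hk hk' h1' h).elim
  · exact h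
  · exact (key k' k hk' hk h1 h).elim

/-- Data extraction: from an addable-box equation get the index. -/
lemma add_data {μ ν : StrictPartition} {n : ℕ}
    (h : ∃ c : ℕ × ℕ, c.2 = c.1 + n ∧ c ∉ SD μ ∧ SD ν = insert c (SD μ)) :
    ∃ k, Gd μ k = n ∧ Gd ν = Function.update (Gd μ) k (n + 1) := by
  obtain ⟨⟨a, b⟩, hd, hnot, hins⟩ := h
  have hb : b = a + n := hd
  have ha : 1 ≤ a := by
    have hm : (a, b) ∈ SD ν := by rw [hins]; exact Finset.mem_insert_self _ _
    exact (mem_SD.mp hm).1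
  obtain ⟨k, rfl⟩ : ∃ k, a = k + 1 := ⟨a - 1, by omega⟩
  subst hb
  obtain ⟨h1, h2⟩ := insert_to_update hnot hins
  exact ⟨k, h1, h2⟩

/-- Uniqueness of the partition obtained by adding a box on diagonal `n`. -/
lemma add_unique {μ ν ν' : StrictPartition} {n : ℕ}
    (h : ∃ c : ℕ × ℕ, c.2 = c.1 + n ∧ c ∉ SD μ ∧ SD ν = insert c (SD μ))
    (h' : ∃ c : ℕ × ℕ, c.2 = c.1 + n ∧ c ∉ SD μ ∧ SD ν' = insert c (SD μ)) :
    ν = ν' := by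
  obtain ⟨k, hk, hG⟩ := add_data h
  obtain ⟨k', hk', hG'⟩ := add_data h'
  have hkk : k = k' := by
    refine add_index_unique (good_Gd μ) hk ?_ hk' ?_
    · rw [← hG]; exact good_Gd ν
    · rw [← hG']; exact good_Gd ν'
  subst hkk
  exact sp_ext (by rw [hG, hG']; exact fun _ => rfl)

end AOpAux
namespace AOpAux

/-- Key local lemma: updating at position `k` (on a far diagonal `j`) does not affect
whether an update at `m ≠ k` by a value in `{i, i+1}` is `Good`. -/
lemma swap_good {G : ℕ → ℕ} {i j k m v : ℕ} (hij : i + 1 < j ∨ j + 1 < i)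
    (hG : Good G) (hk : G k = j) (hG' : Good (Function.update G k (j + 1)))
    (hm : m ≠ k) (hv : v = i ∨ v = i + 1) :
    Good (Function.update (Function.update G m v) k (j + 1)) ↔
      Good (Function.update G m v) := by
  set H := Function.update G m v with hH
  have hHk : H k = j := by rw [hH, Function.update_of_ne (Ne.symm hm)]; exact hk
  have key : ∀ s, Step (Function.update H k (j + 1)) s ↔ Step H s := by
    intro s
    unfold Step
    by_cases hs1 : s = k
    · subst hs1
      rw [Function.update_self, Function.update_of_ne (by omega : s + 1 ≠ s), hHk]
      by_cases hm1 : s + 1 = m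
      · have hv1 : H (s + 1) = v := by rw [hH, hm1, Function.update_self]
        rw [hv1]
        omega
      · have hv1 : H (s + 1) = G (s + 1) := Function.update_of_ne hm1 _ _
        have h1 := hG.step s
        rw [hk] at h1
        have h2 := hG'.step s
        rw [Function.update_self, Function.update_of_ne (by omega : s + 1 ≠ s)] at h2
        rw [hv1]
        omega
    · by_cases hs2 : s + 1 = k
      · rw [hs2, Function.update_self, Function.update_of_ne hs1, hHk]
        by_cases hm2 : s = m
        · have hv1 : H s = v := by rw [hH, hm2, Function.update_self]
          rw [hv1]
          omega
        · have hv1 : H s = G s := Function.update_of_ne hm2 _ _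
          have h1 := hG.step s
          rw [hs2, hk] at h1
          have h2 := hG'.step s
          rw [hs2, Function.update_self, Function.update_of_ne hs1] at h2
          rw [hv1]
          omega
      · rw [Function.update_of_ne hs1, Function.update_of_ne hs2]
  unfold Good
  exact forall_congr' key

/-- Transfer of removability/addability data across an update on a far diagonal. -/
lemma transfer {G : ℕ → ℕ} {i j k : ℕ} (hij : i + 1 < j ∨ j + 1 < i) (hG : Good G)
    (hk : G k = j) (hG' : Good (Function.update G k (j + 1))) (t v : ℕ)
    (ht : (t = i ∧ v = i + 1) ∨ (t = i + 1 ∧ v = i)) :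
    (∃ m, Function.update G k (j + 1) m = t ∧
        Good (Function.update (Function.update G k (j + 1)) m v)) ↔
    (∃ m, G m = t ∧ Good (Function.update G m v)) := by
  constructor
  · rintro ⟨m, hm1, hm2⟩
    have hmk : m ≠ k := by
      intro h
      rw [h, Function.update_self] at hm1
      omega
    rw [Function.update_of_ne hmk] at hm1
    rw [Function.update_comm (Ne.symm hmk)] at hm2
    exact ⟨m, hm1, (swap_good hij hG hk hG' hmk (by omega)).mp hm2⟩
  · rintro ⟨m, hm1, hm2⟩
    have hmk : m ≠ k := by
      intro h
      rw [h, hk] at hm1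
      omega
    refine ⟨m, by rwa [Function.update_of_ne hmk], ?_⟩
    rw [Function.update_comm (Ne.symm hmk)]
    exact (swap_good hij hG hk hG' hmk (by omega)).mpr hm2

end AOpAux
namespace AOpAux

variable {R : Type*} [CommRing R]

lemma aRaw_of_rem (β : R) {n : ℕ} {μ : StrictPartition}
    (h : ∃ c : ℕ × ℕ, IsRemovable μ c ∧ c.2 = c.1 + n) :
    aRaw β n μ = Finsupp.single μ β := by
  unfold aRaw
  rw [if_pos h]

lemma aRaw_of_add (β : R) {n : ℕ} {μ : StrictPartition}
    (hnot : ¬ ∃ c : ℕ × ℕ, IsRemovable μ c ∧ c.2 = c.1 + n) (ν₀ : StrictPartition)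
    (hν₀ : ∃ c : ℕ × ℕ, c.2 = c.1 + n ∧ c ∉ SD μ ∧ SD ν₀ = insert c (SD μ)) :
    aRaw β n μ = Finsupp.single ν₀ 1 := by
  have hQ : ∃ ν : StrictPartition, ∃ c : ℕ × ℕ, c.2 = c.1 + n ∧ c ∉ SD μ ∧
      SD ν = insert c (SD μ) := ⟨ν₀, hν₀⟩
  unfold aRaw
  rw [if_neg hnot, dif_pos hQ]
  congr 1
  exact add_unique hQ.choose_spec hν₀

lemma aRaw_of_none (β : R) {n : ℕ} {μ : StrictPartition}
    (h1 : ¬ ∃ c : ℕ × ℕ, IsRemovable μ c ∧ c.2 = c.1 + n)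
    (h2 : ¬ ∃ ν : StrictPartition, ∃ c : ℕ × ℕ, c.2 = c.1 + n ∧ c ∉ SD μ ∧
      SD ν = insert c (SD μ)) :
    aRaw β n μ = 0 := by
  unfold aRaw
  rw [if_neg h1, dif_neg h2]

lemma aOp_single (β : R) (n : ℕ) (μ : StrictPartition) (c : R) :
    aOp β n (Finsupp.single μ c) = c • aRaw β n μ := by
  unfold aOp
  rw [Finsupp.lift_apply, Finsupp.sum_single_index]
  exact zero_smul R _

end AOpAux
namespace AOpAux

variable {R : Type*} [CommRing R]

lemma comm_core (β : R) {i j : ℕ} (hij : i + 1 < j ∨ j + 1 < i) (μ : StrictPartition) :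
    aOp β i (aRaw β j μ) = aOp β j (aRaw β i μ) := by
  by_cases hPj : ∃ c : ℕ × ℕ, IsRemovable μ c ∧ c.2 = c.1 + j
  · -- a_j acts by β on μ
    by_cases hPi : ∃ c : ℕ × ℕ, IsRemovable μ c ∧ c.2 = c.1 + i
    · rw [aRaw_of_rem β hPj, aRaw_of_rem β hPi, aOp_single, aOp_single,
        aRaw_of_rem β hPj, aRaw_of_rem β hPi]
    · by_cases hQi : ∃ ν : StrictPartition, ∃ c : ℕ × ℕ, c.2 = c.1 + i ∧ c ∉ SD μ ∧
          SD ν = insert c (SD μ)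
      · obtain ⟨ρ, hρ⟩ := hQi
        obtain ⟨k', hk'μ, hupdρ⟩ := add_data hρ
        have hGρ : Good (Function.update (Gd μ) k' (i + 1)) := by
          rw [← hupdρ]; exact good_Gd ρ
        have hPjρ : ∃ c : ℕ × ℕ, IsRemovable ρ c ∧ c.2 = c.1 + j := by
          rw [removable_iff] at hPj ⊢
          rw [hupdρ]
          exact (transfer (Or.symm hij) (good_Gd μ) hk'μ hGρ (j + 1) j
            (Or.inr ⟨rfl, rfl⟩)).mpr hPj
        rw [aRaw_of_rem β hPj, aRaw_of_add β hPi ρ hρ, aOp_single, aOp_single,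
          aRaw_of_add β hPi ρ hρ, aRaw_of_rem β hPjρ]
        simp [Finsupp.smul_single]
      · rw [aRaw_of_rem β hPj, aRaw_of_none β hPi hQi, aOp_single, aRaw_of_none β hPi hQi]
        simp
  · by_cases hQj : ∃ ν : StrictPartition, ∃ c : ℕ × ℕ, c.2 = c.1 + j ∧ c ∉ SD μ ∧
        SD ν = insert c (SD μ)
    · obtain ⟨ν, hν⟩ := hQj
      obtain ⟨k, hkμ, hupdν⟩ := add_data hν
      have hGν : Good (Function.update (Gd μ) k (j + 1)) := by
        rw [← hupdν]; exact good_Gd ν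
      by_cases hPi : ∃ c : ℕ × ℕ, IsRemovable μ c ∧ c.2 = c.1 + i
      · have hPiν : ∃ c : ℕ × ℕ, IsRemovable ν c ∧ c.2 = c.1 + i := by
          rw [removable_iff] at hPi ⊢
          rw [hupdν]
          exact (transfer hij (good_Gd μ) hkμ hGν (i + 1) i (Or.inr ⟨rfl, rfl⟩)).mpr hPi
        rw [aRaw_of_add β hPj ν hν, aRaw_of_rem β hPi, aOp_single, aOp_single,
          aRaw_of_rem β hPiν, aRaw_of_add β hPj ν hν]
        simp [Finsupp.smul_single]
      · have hPiν : ¬ ∃ c : ℕ × ℕ, IsRemovable ν c ∧ c.2 = c.1 + i := by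
          rw [removable_iff]
          rw [hupdν]
          intro hh
          exact hPi (removable_iff.mpr
            ((transfer hij (good_Gd μ) hkμ hGν (i + 1) i (Or.inr ⟨rfl, rfl⟩)).mp hh))
        by_cases hQi : ∃ ρ : StrictPartition, ∃ c : ℕ × ℕ, c.2 = c.1 + i ∧ c ∉ SD μ ∧
            SD ρ = insert c (SD μ)
        · obtain ⟨ρ, hρ⟩ := hQi
          obtain ⟨k', hk'μ, hupdρ⟩ := add_data hρ
          have hGρ : Good (Function.update (Gd μ) k' (i + 1)) := by
            rw [← hupdρ]; exact good_Gd ρ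
          have hkk' : k ≠ k' := by
            intro h
            rw [h] at hkμ
            rw [hkμ] at hk'μ
            omega
          have hPjρ : ¬ ∃ c : ℕ × ℕ, IsRemovable ρ c ∧ c.2 = c.1 + j := by
            rw [removable_iff]
            rw [hupdρ]
            intro hh
            exact hPj (removable_iff.mpr
              ((transfer (Or.symm hij) (good_Gd μ) hk'μ hGρ (j + 1) j
                (Or.inr ⟨rfl, rfl⟩)).mp hh))
          have hσg : Good (Function.update (Function.update (Gd μ) k (j + 1)) k' (i + 1)) := by
            rw [Function.update_comm hkk']
            exact (swap_good hij (good_Gd μ) hkμ hGν hkk'.symm (Or.inr rfl)).mpr hGρ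
          obtain ⟨σ, hσ⟩ := exists_sp_of_good hσg
          have hσν : ∃ c : ℕ × ℕ, c.2 = c.1 + i ∧ c ∉ SD ν ∧ SD σ = insert c (SD ν) := by
            have h1 : Gd ν k' = i := by
              rw [hupdν, Function.update_of_ne (Ne.symm hkk')]; exact hk'μ
            have h2 : Gd σ = Function.update (Gd ν) k' (i + 1) := by
              funext m
              rw [hσ m, hupdν]
            obtain ⟨hn, hi⟩ := update_to_insert h1 h2
            exact ⟨(k' + 1, k' + 1 + i), rfl, hn, hi⟩
          have hσρ : ∃ c : ℕ × ℕ, c.2 = c.1 + j ∧ c ∉ SD ρ ∧ SD σ = insert c (SD ρ) := by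
            have h1 : Gd ρ k = j := by
              rw [hupdρ, Function.update_of_ne hkk']; exact hkμ
            have h2 : Gd σ = Function.update (Gd ρ) k (j + 1) := by
              funext m
              rw [hσ m, Function.update_comm hkk' (j + 1) (i + 1) (Gd μ), ← hupdρ]
            obtain ⟨hn, hi⟩ := update_to_insert h1 h2
            exact ⟨(k + 1, k + 1 + j), rfl, hn, hi⟩
          rw [aRaw_of_add β hPj ν hν, aRaw_of_add β hPi ρ hρ, aOp_single, aOp_single,
            aRaw_of_add β hPiν σ hσν, aRaw_of_add β hPjρ σ hσρ]
        · have hQiν : ¬ ∃ ρ : StrictPartition, ∃ c : ℕ × ℕ, c.2 = c.1 + i ∧ c ∉ SD ν ∧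
              SD ρ = insert c (SD ν) := by
            rw [addable_iff]
            rw [hupdν]
            intro hh
            exact hQi (addable_iff.mpr
              ((transfer hij (good_Gd μ) hkμ hGν i (i + 1) (Or.inl ⟨rfl, rfl⟩)).mp hh))
          rw [aRaw_of_add β hPj ν hν, aRaw_of_none β hPi hQi, aOp_single,
            aRaw_of_none β hPiν hQiν]
          simp
    · rw [aRaw_of_none β hPj hQj, map_zero]
      by_cases hPi : ∃ c : ℕ × ℕ, IsRemovable μ c ∧ c.2 = c.1 + i
      · rw [aRaw_of_rem β hPi, aOp_single, aRaw_of_none β hPj hQj]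
        simp
      · by_cases hQi : ∃ ρ : StrictPartition, ∃ c : ℕ × ℕ, c.2 = c.1 + i ∧ c ∉ SD μ ∧
            SD ρ = insert c (SD μ)
        · obtain ⟨ρ, hρ⟩ := hQi
          obtain ⟨k', hk'μ, hupdρ⟩ := add_data hρ
          have hGρ : Good (Function.update (Gd μ) k' (i + 1)) := by
            rw [← hupdρ]; exact good_Gd ρ
          have hPjρ : ¬ ∃ c : ℕ × ℕ, IsRemovable ρ c ∧ c.2 = c.1 + j := by
            rw [removable_iff]
            rw [hupdρ]
            intro hh
            exact hPj (removable_iff.mpr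
              ((transfer (Or.symm hij) (good_Gd μ) hk'μ hGρ (j + 1) j
                (Or.inr ⟨rfl, rfl⟩)).mp hh))
          have hQjρ : ¬ ∃ ν' : StrictPartition, ∃ c : ℕ × ℕ, c.2 = c.1 + j ∧ c ∉ SD ρ ∧
              SD ν' = insert c (SD ρ) := by
            rw [addable_iff]
            rw [hupdρ]
            intro hh
            exact hQj (addable_iff.mpr
              ((transfer (Or.symm hij) (good_Gd μ) hk'μ hGρ j (j + 1)
                (Or.inl ⟨rfl, rfl⟩)).mp hh))
          rw [aRaw_of_add β hPi ρ hρ, aOp_single, aRaw_of_none β hPjρ hQjρ]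
          simp
        · rw [aRaw_of_none β hPi hQi, map_zero]

lemma aOp_comm (β : R) {i j : ℕ} (hij : i + 1 < j ∨ j + 1 < i) :
    (aOp β i (R := R)).comp (aOp β j) = (aOp β j).comp (aOp β i) := by
  apply Finsupp.lhom_ext
  intro μ b
  simp only [LinearMap.comp_apply, aOp_single, map_smul]
  rw [comm_core β hij μ]

end AOpAux
/-- The box-adding operators on distant diagonals commute:
`A_i(x)·A_j(y) = A_j(y)·A_i(x)` whenever `|i - j| > 1`. -/
theorem AOp_comm_far {R : Type*} [CommRing R] (β x y : R) (i j : ℕ)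
    (hij : i + 1 < j ∨ j + 1 < i) :
    (AOp β i x).comp (AOp β j y) = (AOp β j y).comp (AOp β i x) := by
  have hcomm := AOpAux.aOp_comm (R := R) β hij
  unfold AOp
  simp only [LinearMap.add_comp, LinearMap.comp_add, LinearMap.id_comp, LinearMap.comp_id,
    LinearMap.smul_comp, LinearMap.comp_smul, hcomm, smul_add, smul_smul, mul_comm x y]
  abel

end
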